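/- Let p be a prime. For any two oriented link-diagram coloring spaces Col_{R_p}(D) and Col_{R_p}(D') (Z/pZ-vector spaces containing the trivial colorings), if |Col_{R_p}(D)| = |Col_{R_p}(D')| then for every subset S of End(R_p) the quandle coloring quivers Q^S_{R_p}(D) and Q^S_{R_p}(D') are isomorphic as quivers. -/

import Mathlib

/-- Auxiliary: a linear equivalence sending the constant-1 coloring to the
constant-1 coloring maps `f`-edges to `f`-edges, for `f` affine. -/
private lemma aux_edge {p : ℕ} {A A' : Type*}
    {V : Submodule (ZMod p) (A → ZMod p)} {V' : Submodule (ZMod p) (A' → ZMod p)}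
    {h1 : (fun _ => (1 : ZMod p)) ∈ V} {h1' : (fun _ => (1 : ZMod p)) ∈ V'}
    (φ : V ≃ₗ[ZMod p] V')
    (hφ : φ ⟨fun _ => 1, h1⟩ = ⟨fun _ => 1, h1'⟩)
    {f : ZMod p → ZMod p} {a b : ZMod p} (hf : ∀ x, f x = a * x + b)
    {v w : V} (hw : (w : A → ZMod p) = f ∘ (v : A → ZMod p)) :
    (φ w : A' → ZMod p) = f ∘ (φ v : A' → ZMod p) := by
  have hw' : w = a • v + b • (⟨fun _ => 1, h1⟩ : V) := by
    apply Subtype.ext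
    rw [hw]
    funext x
    simp [hf, mul_one]
  have h2 : φ w = a • φ v + b • (⟨fun _ => 1, h1'⟩ : V') := by
    rw [hw', map_add, map_smul, map_smul, hφ]
  have h3 : (φ w : A' → ZMod p) = a • (φ v : A' → ZMod p) + b • ((fun _ => 1) : A' → ZMod p) := by
    rw [h2]; rfl
  rw [h3]
  funext x
  simp [hf, mul_one]

theorem dihedral_prime_quiver_iso_of_card_eq (p : ℕ) (hp : p.Prime)
    (A A' : Type*) [Finite A] [Finite A']
    (V : Submodule (ZMod p) (A → ZMod p)) (V' : Submodule (ZMod p) (A' → ZMod p))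
    (h1 : (fun _ => (1 : ZMod p)) ∈ V) (h1' : (fun _ => (1 : ZMod p)) ∈ V')
    (hcard : Nat.card V = Nat.card V')
    (S : Set (ZMod p → ZMod p))
    (hS : S ⊆ {f | ∃ a b : ZMod p, ∀ x, f x = a * x + b}) :
    ∃ φ : V ≃ V', ∀ v w : V,
      (∃ f ∈ S, (w : A → ZMod p) = f ∘ (v : A → ZMod p)) ↔
      (∃ f ∈ S, (φ w : A' → ZMod p) = f ∘ (φ v : A' → ZMod p)) := by
  classical
  haveI := Fact.mk hp
  haveI : NeZero p := ⟨hp.pos.ne'⟩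
  haveI : Fintype V := Fintype.ofFinite V
  haveI : Fintype V' := Fintype.ofFinite V'
  set e : V := ⟨fun _ => 1, h1⟩ with he_def
  set e' : V' := ⟨fun _ => 1, h1'⟩ with he'_def
  -- first construct a linear equivalence sending `e` to `e'`
  obtain ⟨φ, hφ⟩ : ∃ φ : V ≃ₗ[ZMod p] V', φ e = e' := by
    by_cases h0 : e = 0
    · -- then `A` is empty, both spaces are trivial
      haveI hsV : Subsingleton V := by
        constructor
        intro x y
        apply Subtype.ext
        funext a
        exfalso
        have : (fun _ : A => (1 : ZMod p)) = fun _ => (0 : ZMod p) := by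
          have := congrArg (Subtype.val) h0
          simp [he_def] at this; exact this
        exact one_ne_zero (congrFun this a)
      haveI hsV' : Subsingleton V' := by
        have : Nat.card V' = 1 := by
          rw [← hcard, Nat.card_eq_one_iff_unique]
          exact ⟨hsV, ⟨0⟩⟩
        exact (Nat.card_eq_one_iff_unique.mp this).1
      exact ⟨LinearEquiv.ofSubsingleton V V', Subsingleton.elim _ _⟩
    · -- `e ≠ 0`; show also `e' ≠ 0`
      have h0' : e' ≠ 0 := by
        intro h
        apply h0
        haveI hsV' : Subsingleton V' := by
          constructor
          intro x y
          apply Subtype.ext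
          funext a
          exfalso
          have : (fun _ : A' => (1 : ZMod p)) = fun _ => (0 : ZMod p) := by
            have := congrArg (Subtype.val) h
            simp [he'_def] at this; exact this
          exact one_ne_zero (congrFun this a)
        haveI hsV : Subsingleton V := by
          have : Nat.card V = 1 := by
            rw [hcard, Nat.card_eq_one_iff_unique]
            exact ⟨hsV', ⟨0⟩⟩
          exact (Nat.card_eq_one_iff_unique.mp this).1
        exact Subsingleton.elim _ _
      have hli : LinearIndepOn (ZMod p) id ({e} : Set V) :=
        LinearIndepOn.singleton h0
      have hli' : LinearIndepOn (ZMod p) id ({e'} : Set V') :=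
        LinearIndepOn.singleton h0'
      let B := Module.Basis.extend hli
      let B' := Module.Basis.extend hli'
      haveI : Fintype (hli.extend (Set.subset_univ _)) := Fintype.ofFinite _
      haveI : Fintype (hli'.extend (Set.subset_univ _)) := Fintype.ofFinite _
      -- equal finrank from equal cardinality
      have hfr : Module.finrank (ZMod p) V = Module.finrank (ZMod p) V' := by
        have hV : Fintype.card V = p ^ Module.finrank (ZMod p) V := by
          simpa [ZMod.card] using Module.card_eq_pow_finrank (K := ZMod p) (V := V)
        have hV' : Fintype.card V' = p ^ Module.finrank (ZMod p) V' := by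
          simpa [ZMod.card] using Module.card_eq_pow_finrank (K := ZMod p) (V := V')
        have : p ^ Module.finrank (ZMod p) V = p ^ Module.finrank (ZMod p) V' := by
          rw [← hV, ← hV', ← Nat.card_eq_fintype_card, ← Nat.card_eq_fintype_card, hcard]
        exact Nat.pow_right_injective hp.two_le this
      have hcardidx : Fintype.card (hli.extend (Set.subset_univ _)) =
          Fintype.card (hli'.extend (Set.subset_univ _)) := by
        have h1 := Module.finrank_eq_card_basis B
        have h2 := Module.finrank_eq_card_basis B'
        omega
      let σ0 : (hli.extend (Set.subset_univ _)) ≃ (hli'.extend (Set.subset_univ _)) :=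
        Fintype.equivOfCardEq hcardidx
      have hei : e ∈ hli.extend (Set.subset_univ _) :=
        hli.subset_extend _ rfl
      have hei' : e' ∈ hli'.extend (Set.subset_univ _) :=
        hli'.subset_extend _ rfl
      let i0 : (hli.extend (Set.subset_univ _) : Set V) := ⟨e, hei⟩
      let i0' : (hli'.extend (Set.subset_univ _) : Set V') := ⟨e', hei'⟩
      let σ := σ0.trans (Equiv.swap (σ0 i0) i0')
      have hσ : σ i0 = i0' := by simp [σ]
      refine ⟨B.equiv B' σ, ?_⟩
      have h4 : B i0 = e := Module.Basis.extend_apply_self hli i0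
      have h5 : B' i0' = e' := Module.Basis.extend_apply_self hli' i0'
      calc (B.equiv B' σ) e = (B.equiv B' σ) (B i0) := by rw [h4]
        _ = B' (σ i0) := B.equiv_apply i0 B' σ
        _ = e' := by rw [hσ, h5]
  -- now the quiver isomorphism
  refine ⟨φ.toEquiv, fun v w => ?_⟩
  constructor
  · rintro ⟨f, hfS, hw⟩
    obtain ⟨a, b, hf⟩ := hS hfS
    exact ⟨f, hfS, aux_edge φ hφ hf hw⟩
  · rintro ⟨f, hfS, hw⟩
    obtain ⟨a, b, hf⟩ := hS hfS
    have hφ' : φ.symm e' = e := by rw [← hφ, LinearEquiv.symm_apply_apply]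
    have := aux_edge φ.symm hφ' hf (v := φ v) (w := φ w) hw
    simpa using ⟨f, hfS, by simpa using this⟩
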